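/- Let (X,d) be a complete metric space and (Y,ρ) a complete linear metric space with shift-invariant metric. Let F, G : X ⇉ Y with (ȳ,z̄) ∈ F(x̄) × G(x̄), and let c', r > 0 and 0 < ℓ < c' be such that graph F ∩ (B[x̄,2r]×B[ȳ,2c'r]) and graph G ∩ (B[x̄,2r]×B[z̄,2ℓr]) are closed, B(v,c'τ) ⊆ F(B(x,τ)) whenever x ∈ B(x̄,r), v ∈ F(x)∩B(ȳ,c'r), τ ∈ (0,r), and G(x)∩B(z̄,ℓr) ⊆ G(x') + ℓ·d(x,x')·B_Y for all x,x' ∈ B(x̄,2r). Then (F+G)(B(x̄,t)) ⊇ B(ȳ+z̄, (c−ℓ)t) for every c ∈ (ℓ,c') and every t ∈ (0,r). -/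

import Mathlib

open Metric Set Filter Topology
open scoped ENNReal NNReal Pointwise

noncomputable section

/-- The image of a set under a set-valued mapping. -/
def SVImage {X Y : Type*} (F : X → Set Y) (s : Set X) : Set Y := ⋃ x ∈ s, F x

/-- The modulus of openness (openness with a linear rate at a point). -/
def lopenMod {X Y : Type*} [PseudoMetricSpace X] [PseudoMetricSpace Y]
    (F : X → Set Y) (xb : X) (yb : Y) : ℝ≥0∞ :=
  sSup (ENNReal.ofReal '' {c : ℝ | 0 < c ∧ ∃ ε > (0:ℝ), ∀ t ∈ Ioo (0:ℝ) ε,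
    closedBall yb (c * t) ⊆ SVImage F (closedBall xb t)})

/-- The modulus of surjection (openness with a linear rate around a point). -/
def surMod {X Y : Type*} [PseudoMetricSpace X] [PseudoMetricSpace Y]
    (F : X → Set Y) (xb : X) (yb : Y) : ℝ≥0∞ :=
  sSup (ENNReal.ofReal '' {c : ℝ | 0 < c ∧ ∃ ε > (0:ℝ), ∃ U ∈ 𝓝 xb, ∃ V ∈ 𝓝 yb,
    ∀ x ∈ U, ∀ y ∈ V, y ∈ F x → ∀ t ∈ Ioo (0:ℝ) ε,
      closedBall y (c * t) ⊆ SVImage F (closedBall x t)})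

/-- The semiregularity modulus. -/
def semiregMod {X Y : Type*} [PseudoMetricSpace X] [PseudoMetricSpace Y]
    (F : X → Set Y) (xb : X) (yb : Y) : ℝ≥0∞ :=
  sInf (ENNReal.ofReal '' {κ : ℝ | 0 < κ ∧ ∃ V ∈ 𝓝 yb, ∀ y ∈ V,
    EMetric.infEdist xb {x | y ∈ F x} ≤ ENNReal.ofReal (κ * dist yb y)})

/-- The Lipschitz (Aubin) modulus of a set-valued mapping. -/
def lipMod {X Y : Type*} [PseudoMetricSpace X] [PseudoMetricSpace Y]
    (G : X → Set Y) (xb : X) (zb : Y) : ℝ≥0∞ :=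
  sInf (ENNReal.ofReal '' {μ : ℝ | 0 < μ ∧ ∃ U ∈ 𝓝 xb, ∃ V ∈ 𝓝 zb,
    ∀ x ∈ U, ∀ x' ∈ U, ∀ z ∈ G x' ∩ V,
      EMetric.infEdist z (G x) ≤ ENNReal.ofReal (μ * dist x x')})

/-- The calmness modulus of a single-valued mapping. -/
def calmMod {X Y : Type*} [PseudoMetricSpace X] [PseudoMetricSpace Y]
    (f : X → Y) (xb : X) : ℝ≥0∞ :=
  sInf (ENNReal.ofReal '' {μ : ℝ | 0 < μ ∧ ∃ U ∈ 𝓝 xb, ∀ x ∈ U,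
    dist (f x) (f xb) ≤ μ * dist x xb})

end

/-- Auxiliary: dependent recursion with choice, producing a sequence satisfying an
invariant and a step relation. -/
theorem exists_seq_of_rec_aux {St : Type*} (Inv : ℕ → St → Prop) (Step : ℕ → St → St → Prop)
    (p0 : St) (h0 : Inv 0 p0)
    (key : ∀ n p, Inv n p → ∃ p', Inv (n + 1) p' ∧ Step n p p') :
    ∃ s : ℕ → St, s 0 = p0 ∧ (∀ n, Inv n (s n)) ∧ ∀ n, Step n (s n) (s (n + 1)) := by
  choose! f hf1 hf2 using key
  refine ⟨fun n => Nat.rec p0 (fun n p => f n p) n, rfl, ?_⟩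
  have hinv : ∀ n, Inv n (Nat.rec p0 (fun n p => f n p) n : St) := by
    intro n
    induction n with
    | zero => exact h0
    | succ n ih => exact hf1 n _ ih
  exact ⟨hinv, fun n => hf2 n _ (hinv n)⟩

set_option maxHeartbeats 1600000 in
/-- semiregularity of the sum (Theorem 4.4 of the paper): if `F` is
linearly open around `(xb,yb)` with rate `c'` and `G` is Lipschitz-like with constant
`ℓ < c'` (on the indicated localizations, with closed localized graphs), then
`(F+G)(B(xb,t)) ⊇ B(yb+zb,(c−ℓ)t)` for all `c ∈ (ℓ,c')` and `t ∈ (0,r)`.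
`Y` is a complete linear metric space with shift-invariant metric. -/

theorem semiregularity_of_sum {X Y : Type*} [MetricSpace X] [CompleteSpace X]
    [AddCommGroup Y] [MetricSpace Y] [CompleteSpace Y]
    (hshift : ∀ y y' w : Y, dist (y + w) (y' + w) = dist y y')
    (F G : X → Set Y) (xb : X) (yb zb : Y) (hF : yb ∈ F xb) (hG : zb ∈ G xb)
    (c' r ℓ : ℝ) (hc' : 0 < c') (hr : 0 < r) (hℓ : 0 < ℓ) (hℓc : ℓ < c')
    (hFclosed : IsClosed ({p : X × Y | p.2 ∈ F p.1} ∩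
      closedBall xb (2 * r) ×ˢ closedBall yb (2 * c' * r)))
    (hGclosed : IsClosed ({p : X × Y | p.2 ∈ G p.1} ∩
      closedBall xb (2 * r) ×ˢ closedBall zb (2 * ℓ * r)))
    (hFopen : ∀ x ∈ ball xb r, ∀ v ∈ F x ∩ ball yb (c' * r), ∀ τ ∈ Ioo (0:ℝ) r,
      ball v (c' * τ) ⊆ SVImage F (ball x τ))
    (hGlip : ∀ x ∈ ball xb (2 * r), ∀ x' ∈ ball xb (2 * r),
      ∀ z ∈ G x ∩ ball zb (ℓ * r), ∃ z' ∈ G x', dist z z' ≤ ℓ * dist x x') :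
    ∀ c ∈ Ioo ℓ c', ∀ t ∈ Ioo (0:ℝ) r,
      ball (yb + zb) ((c - ℓ) * t) ⊆ SVImage (fun x => F x + G x) (ball xb t) := by
  rintro c ⟨hcl, hcc'⟩ t ⟨ht0, htr⟩ y hy
  have hc : 0 < c := hℓ.trans hcl
  -- shift-invariance consequences
  have hsub : ∀ a b : Y, dist (y - a) (y - b) = dist b a := by
    intro a b
    have h := hshift (y - a) (y - b) (a + b - y)
    have e1 : y - a + (a + b - y) = b := by abel
    have e2 : y - b + (a + b - y) = a := by abel
    rw [e1, e2] at h
    exact h.symm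
  have hsub2 : ∀ a w : Y, dist (y - a) w = dist y (w + a) := by
    intro a w
    have h := hshift (y - a) w a
    have e1 : y - a + a = y := by abel
    rw [e1] at h
    exact h.symm
  obtain ⟨δ, hδ0, hδ, hδy⟩ : ∃ δ : ℝ, 0 ≤ δ ∧ δ < (c - ℓ) * t ∧
      dist y (yb + zb) = δ := ⟨_, dist_nonneg, mem_ball.mp hy, rfl⟩
  obtain ⟨q, hq0, hq1, hcq⟩ : ∃ q : ℝ, 0 < q ∧ q < 1 ∧ c * q = ℓ :=
    ⟨ℓ / c, div_pos hℓ hc, (div_lt_one hc).mpr hcl, by field_simp⟩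
  have h1q : 0 < 1 - q := by linarith
  obtain ⟨τ0, hτ0pos, hδτ0, hτ0t⟩ : ∃ τ0 : ℝ, 0 < τ0 ∧ δ < c' * τ0 ∧
      τ0 < t * (1 - q) := by
    have hkey : δ / c' < t * (1 - q) := by
      rw [div_lt_iff₀ hc']
      nlinarith [mul_pos ht0 h1q]
    refine ⟨(δ / c' + t * (1 - q)) / 2, ?_, ?_, by linarith⟩
    · have : 0 ≤ δ / c' := div_nonneg hδ0 hc'.le
      linarith
    · rw [← div_lt_iff₀' hc']
      linarith
  obtain ⟨T, hTpos, hTq, hτ0T, hTt⟩ : ∃ T : ℝ, 0 < T ∧ T * (1 - q) = τ0 ∧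
      τ0 ≤ T ∧ T < t := by
    refine ⟨τ0 / (1 - q), div_pos hτ0pos h1q, by field_simp, ?_, ?_⟩
    · rw [le_div_iff₀ h1q]
      nlinarith
    · rw [div_lt_iff₀ h1q]
      linarith
  have hq_pow_pos : ∀ n : ℕ, 0 < q ^ n := fun n => pow_pos hq0 n
  have hq_pow_le : ∀ n : ℕ, q ^ n ≤ 1 := fun n => pow_le_one₀ hq0.le hq1.le
  obtain ⟨S, hS0, hSstep, hSnonneg, hSleT⟩ : ∃ S : ℕ → ℝ, S 0 = 0 ∧
      (∀ n, S (n + 1) = S n + τ0 * q ^ n) ∧ (∀ n, 0 ≤ S n) ∧ ∀ n, S n ≤ T := by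
    refine ⟨fun n => T * (1 - q ^ n), by simp, fun n => ?_, fun n => ?_, fun n => ?_⟩
    · show T * (1 - q ^ (n + 1)) = T * (1 - q ^ n) + τ0 * q ^ n
      rw [← hTq, pow_succ]
      ring
    · show 0 ≤ T * (1 - q ^ n)
      nlinarith [hq_pow_le n]
    · show T * (1 - q ^ n) ≤ T
      nlinarith [hq_pow_pos n]
  -- the invariant and step relation for the iterative construction
  have hInv0 : (fun (n : ℕ) (p : X × Y × Y) =>
      p.2.1 ∈ F p.1 ∧ p.2.2 ∈ G p.1 ∧ dist p.1 xb ≤ S n ∧ dist p.2.2 zb ≤ ℓ * S n ∧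
      dist p.2.1 yb ≤ δ + ℓ * S n ∧ dist (y - p.2.2) p.2.1 < c' * (τ0 * q ^ n))
      0 (xb, yb, zb) := by
    refine ⟨hF, hG, by simp [hS0], by simp [hS0], by simp [hS0, hδ0], ?_⟩
    have : dist (y - zb) yb = δ := by rw [hsub2, hδy]
    simpa [this] using hδτ0
  have hkey : ∀ n (p : X × Y × Y),
      (p.2.1 ∈ F p.1 ∧ p.2.2 ∈ G p.1 ∧ dist p.1 xb ≤ S n ∧ dist p.2.2 zb ≤ ℓ * S n ∧
        dist p.2.1 yb ≤ δ + ℓ * S n ∧ dist (y - p.2.2) p.2.1 < c' * (τ0 * q ^ n)) →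
      ∃ p' : X × Y × Y,
        (p'.2.1 ∈ F p'.1 ∧ p'.2.2 ∈ G p'.1 ∧ dist p'.1 xb ≤ S (n + 1) ∧
          dist p'.2.2 zb ≤ ℓ * S (n + 1) ∧ dist p'.2.1 yb ≤ δ + ℓ * S (n + 1) ∧
          dist (y - p'.2.2) p'.2.1 < c' * (τ0 * q ^ (n + 1))) ∧
        (p'.2.1 = y - p.2.2 ∧ dist p.1 p'.1 < τ0 * q ^ n ∧
          dist p.2.2 p'.2.2 ≤ ℓ * dist p.1 p'.1) := by
    rintro n ⟨x, v, z⟩ ⟨hv, hz, hx, hzd, hvd, hclose⟩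
    dsimp only at hv hz hx hzd hvd hclose
    have hSn := hSleT n
    have hSn1 := hSleT (n + 1)
    have hxr : x ∈ ball xb r := mem_ball.mpr (by linarith)
    have hv2 : v ∈ ball yb (c' * r) := by
      rw [mem_ball]
      nlinarith
    have hτIoo : τ0 * q ^ n ∈ Ioo (0 : ℝ) r := by
      constructor
      · exact mul_pos hτ0pos (hq_pow_pos n)
      · nlinarith [hq_pow_le n, hq_pow_pos n]
    have hin : y - z ∈ ball v (c' * (τ0 * q ^ n)) := mem_ball.mpr hclose
    have himg := hFopen x hxr v ⟨hv, hv2⟩ _ hτIoo hin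
    simp only [SVImage, Set.mem_iUnion, exists_prop] at himg
    obtain ⟨x', hx'ball, hyzF⟩ := himg
    have hx'x : dist x x' < τ0 * q ^ n := by
      rw [dist_comm]; exact mem_ball.mp hx'ball
    have hx2r : x ∈ ball xb (2 * r) := mem_ball.mpr (by linarith)
    have hx'2r : x' ∈ ball xb (2 * r) := by
      rw [mem_ball]
      calc dist x' xb ≤ dist x' x + dist x xb := dist_triangle _ _ _
        _ < τ0 * q ^ n + S n := by rw [dist_comm] at hx'x; linarith
        _ < 2 * r := by nlinarith [hq_pow_le n, hq_pow_pos n]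
    have hzball : z ∈ ball zb (ℓ * r) := by
      rw [mem_ball]
      nlinarith
    obtain ⟨z', hz', hzz'⟩ := hGlip x hx2r x' hx'2r z ⟨hz, hzball⟩
    refine ⟨(x', y - z, z'), ⟨hyzF, hz', ?_, ?_, ?_, ?_⟩, rfl, hx'x, hzz'⟩
    · calc dist x' xb ≤ dist x' x + dist x xb := dist_triangle _ _ _
        _ ≤ S (n + 1) := by rw [dist_comm] at hx'x; rw [hSstep]; linarith
    · have h1 : dist z' zb ≤ dist z' z + dist z zb := dist_triangle _ _ _
      have h2 : dist z' z ≤ ℓ * dist x x' := by rw [dist_comm]; exact hzz'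
      rw [hSstep]
      nlinarith
    · show dist (y - z) yb ≤ δ + ℓ * S (n + 1)
      have h1 : dist (y - z) yb ≤ dist (y - z) (y - zb) + dist (y - zb) yb :=
        dist_triangle _ _ _
      have h2 : dist (y - z) (y - zb) = dist zb z := hsub z zb
      have h3 : dist (y - zb) yb = δ := by rw [hsub2, hδy]
      rw [h2, h3, dist_comm zb z] at h1
      rw [hSstep]
      nlinarith [mul_pos (mul_pos hℓ hτ0pos) (hq_pow_pos n), hzd]
    · have h1 : dist (y - z') (y - z) = dist z z' := hsub z' z
      have h2 : dist z z' < ℓ * (τ0 * q ^ n) :=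
        lt_of_le_of_lt hzz' (by nlinarith)
      have h3 : ℓ * (τ0 * q ^ n) = c * (τ0 * q ^ (n + 1)) := by
        rw [← hcq, pow_succ]; ring
      have h4 : c * (τ0 * q ^ (n + 1)) < c' * (τ0 * q ^ (n + 1)) := by
        have := mul_pos hτ0pos (hq_pow_pos (n + 1))
        nlinarith
      rw [h1]
      linarith [h3 ▸ h2]
  obtain ⟨s, hs0, hInv, hStep⟩ := exists_seq_of_rec_aux _ _ (xb, yb, zb) hInv0 hkey
  have hxC : CauchySeq (fun n => (s n).1) :=
    cauchySeq_of_le_geometric q τ0 hq1 (fun n => ((hStep n).2.1).le)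
  obtain ⟨xh, hxh⟩ := cauchySeq_tendsto_of_complete hxC
  have hzC : CauchySeq (fun n => (s n).2.2) := by
    refine cauchySeq_of_le_geometric q (ℓ * τ0) hq1 (fun n => ?_)
    have h1 := (hStep n).2.2
    have h2 := (hStep n).2.1
    calc dist (s n).2.2 (s (n + 1)).2.2 ≤ ℓ * dist (s n).1 (s (n + 1)).1 := h1
      _ ≤ ℓ * (τ0 * q ^ n) := by nlinarith
      _ = ℓ * τ0 * q ^ n := by ring
  obtain ⟨zh, hzh⟩ := cauchySeq_tendsto_of_complete hzC
  have hxhT : dist xh xb ≤ T :=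
    le_of_tendsto' (hxh.dist tendsto_const_nhds)
      (fun n => le_trans (hInv n).2.2.1 (hSleT n))
  have hzhT : dist zh zb ≤ ℓ * T :=
    le_of_tendsto' (hzh.dist tendsto_const_nhds)
      (fun n => le_trans (hInv n).2.2.2.1 (by nlinarith [hSleT n]))
  have hvlim : Tendsto (fun n => (s (n + 1)).2.1) atTop (𝓝 (y - zh)) := by
    rw [tendsto_iff_dist_tendsto_zero]
    have heq : (fun n => dist (s (n + 1)).2.1 (y - zh)) =
        fun n => dist (s n).2.2 zh := by
      funext n
      rw [(hStep n).1, hsub, dist_comm]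
    rw [heq]
    exact tendsto_iff_dist_tendsto_zero.mp hzh
  have hxlim1 : Tendsto (fun n => (s (n + 1)).1) atTop (𝓝 xh) := by
    have := hxh.comp (tendsto_add_atTop_nat 1)
    exact this
  have hyzF : y - zh ∈ F xh := by
    have hmem : ∀ n : ℕ, ((s (n + 1)).1, (s (n + 1)).2.1) ∈
        ({p : X × Y | p.2 ∈ F p.1} ∩
          closedBall xb (2 * r) ×ˢ closedBall yb (2 * c' * r)) := by
      intro n
      refine ⟨(hInv (n + 1)).1, ?_, ?_⟩
      · exact mem_closedBall.mpr
          (le_trans (hInv (n + 1)).2.2.1 (by linarith [hSleT (n + 1)]))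
      · exact mem_closedBall.mpr
          (le_trans (hInv (n + 1)).2.2.2.2.1 (by nlinarith [hSleT (n + 1)]))
    exact (hFclosed.mem_of_tendsto (hxlim1.prodMk_nhds hvlim)
      (Filter.Eventually.of_forall hmem)).1
  have hzhG : zh ∈ G xh := by
    have hmem : ∀ n : ℕ, ((s n).1, (s n).2.2) ∈
        ({p : X × Y | p.2 ∈ G p.1} ∩
          closedBall xb (2 * r) ×ˢ closedBall zb (2 * ℓ * r)) := by
      intro n
      refine ⟨(hInv n).2.1, ?_, ?_⟩
      · exact mem_closedBall.mpr (le_trans (hInv n).2.2.1 (by linarith [hSleT n]))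
      · exact mem_closedBall.mpr
          (le_trans (hInv n).2.2.2.1 (by nlinarith [hSleT n]))
    exact (hGclosed.mem_of_tendsto (hxh.prodMk_nhds hzh)
      (Filter.Eventually.of_forall hmem)).1
  have hxhball : xh ∈ ball xb t := mem_ball.mpr (lt_of_le_of_lt hxhT hTt)
  simp only [SVImage, Set.mem_iUnion, exists_prop]
  refine ⟨xh, hxhball, ?_⟩
  have := Set.add_mem_add hyzF hzhG
  simpa [sub_add_cancel] using this
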